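/- Let R be an integral domain with distinguished element δ ≠ ±2, and suppose [ℓ] = 0 for ℓ minimal positive. If n ≡ m (mod 2) and Δ_n = Δ_m in R, then n ≡ m (mod 2ℓ) or n ≡ -m (mod 2ℓ). -/

import Mathlib

section Aux

variable {R : Type*} [CommRing R] (δ : R)

/-- Two sequences satisfying the quantum recurrence that agree at `0` and `1`
agree everywhere (two-sided induction). -/
private lemma qext (g h : ℤ → R)
    (hg : ∀ k : ℤ, g (k + 1) = δ * g k - g (k - 1))
    (hh : ∀ k : ℤ, h (k + 1) = δ * h k - h (k - 1))
    (e0 : g 0 = h 0) (e1 : g 1 = h 1) : ∀ k : ℤ, g k = h k := by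
  have up : ∀ p : ℕ, g (p : ℤ) = h (p : ℤ) ∧ g ((p : ℤ) + 1) = h ((p : ℤ) + 1) := by
    intro p
    induction p with
    | zero => simpa using ⟨e0, e1⟩
    | succ p ih =>
      have hgn := hg ((p : ℤ) + 1)
      have hhn := hh ((p : ℤ) + 1)
      rw [add_sub_cancel_right] at hgn hhn
      refine ⟨by push_cast; exact ih.2, ?_⟩
      push_cast
      rw [hgn, hhn, ih.1, ih.2]
  have dn : ∀ p : ℕ, g (-(p : ℤ)) = h (-(p : ℤ)) ∧ g (-(p : ℤ) + 1) = h (-(p : ℤ) + 1) := by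
    intro p
    induction p with
    | zero => simpa using ⟨e0, e1⟩
    | succ p ih =>
      have hgn := hg (-(p : ℤ))
      have hhn := hh (-(p : ℤ))
      have key : g (-(p : ℤ) - 1) = h (-(p : ℤ) - 1) := by
        have h2 : g (-(p:ℤ) - 1) - h (-(p:ℤ) - 1)
            = δ * (g (-(p:ℤ)) - h (-(p:ℤ))) - (g (-(p:ℤ)+1) - h (-(p:ℤ)+1)) := by
          linear_combination hgn - hhn
        rw [ih.1, ih.2] at h2
        simpa [sub_eq_zero] using h2
      constructor
      · rw [show (-((p : ℕ) + 1 : ℕ) : ℤ) = -(p:ℤ) - 1 by push_cast; ring]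
        exact key
      · rw [show ((-((p : ℕ) + 1 : ℕ) : ℤ) + 1) = -(p:ℤ) by push_cast; ring]
        exact ih.1
  intro k
  rcases le_or_gt 0 k with hk | hk
  · obtain ⟨p, rfl⟩ := Int.eq_ofNat_of_zero_le hk
    exact (up p).1
  · obtain ⟨p, rfl⟩ := Int.exists_eq_neg_ofNat hk.le
    exact (dn p).1

end Aux

/-- Let `R` be a domain with `δ ≠ ±2` and `ℓ` minimal positive with `[ℓ] = 0`.
If `n ≡ m (mod 2)` and `Δ_n = Δ_m`, then `n ≡ ±m (mod 2ℓ)`. -/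
theorem stmt8 {R : Type*} [CommRing R] [IsDomain R] (δ : R)
    (hδ : δ ≠ 2) (hδ' : δ ≠ -2)
    (f : ℤ → R) (h0 : f 0 = 0) (h1 : f 1 = 1)
    (hrec : ∀ n : ℤ, f (n + 1) = δ * f n - f (n - 1))
    (ℓ : ℕ) (hℓ : 0 < ℓ) (hvan : f ℓ = 0)
    (hmin : ∀ j : ℕ, 0 < j → j < ℓ → f j ≠ 0)
    (n m : ℤ) (hpar : n ≡ m [ZMOD 2])
    (hΔ : f (n + 1) - f (n - 1) = f (m + 1) - f (m - 1)) :
    n ≡ m [ZMOD (2 * ℓ)] ∨ n ≡ -m [ZMOD (2 * ℓ)] := by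
  -- f(-1) = -1
  have hm1 : f (-1) = -1 := by
    have h := hrec 0
    rw [zero_add, zero_sub, h0, h1] at h
    linear_combination h
  -- the constant of quasi-periodicity
  set c : R := -f ((ℓ : ℤ) - 1) with hc
  -- quasi-periodicity: f (k + ℓ) = c * f k
  have hper : ∀ k : ℤ, f (k + ℓ) = c * f k := by
    refine qext δ (fun k => f (k + ℓ)) (fun k => c * f k) ?_ ?_ ?_ ?_
    · intro k
      rw [show k + 1 + (ℓ:ℤ) = (k + ℓ) + 1 by ring, show k - 1 + (ℓ:ℤ) = (k + ℓ) - 1 by ring]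
      exact hrec (k + ℓ)
    · intro k; linear_combination c * hrec k
    · simp only [zero_add, hvan, h0, mul_zero]
    · have h := hrec (ℓ : ℤ)
      rw [hvan] at h
      rw [show (1 : ℤ) + (ℓ:ℤ) = (ℓ:ℤ) + 1 by ring, h, h1, hc]
      ring
  -- ℓ ≥ 2 and c ≠ 0
  have hℓ2 : 2 ≤ ℓ := by
    by_contra hcon
    have : ℓ = 1 := by omega
    subst this
    rw [show ((1:ℕ):ℤ) = 1 by norm_num, h1] at hvan
    exact one_ne_zero hvan
  have hcne : c ≠ 0 := by
    have hne := hmin (ℓ - 1) (by omega) (by omega)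
    have e : ((ℓ - 1 : ℕ) : ℤ) = (ℓ:ℤ) - 1 := by omega
    intro hcontra
    exact hne (by rw [e]; exact neg_eq_zero.mp hcontra)
  -- vanishing set of f is ℓℤ
  have hzero : ∀ k : ℤ, f k = 0 ↔ ((ℓ:ℤ)) ∣ k := by
    have step : ∀ k : ℤ, f (k + ℓ) = 0 ↔ f k = 0 := by
      intro k; rw [hper k, mul_eq_zero]
      simp [hcne]
    have shift : ∀ q : ℤ, ∀ r : ℤ, f (r + ℓ * q) = 0 ↔ f r = 0 := by
      intro q
      induction q using Int.induction_on with
      | zero => simp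
      | succ q ih =>
        intro r
        have := step (r + (ℓ:ℤ) * q)
        rw [show r + (ℓ:ℤ) * q + ℓ = r + (ℓ:ℤ) * ((q:ℤ) + 1) by ring] at this
        exact this.trans (ih r)
      | pred q ih =>
        intro r
        have := step (r + (ℓ:ℤ) * (-(q:ℤ) - 1))
        rw [show r + (ℓ:ℤ) * (-(q:ℤ) - 1) + ℓ = r + (ℓ:ℤ) * (-(q:ℤ)) by ring] at this
        exact this.symm.trans (ih r)
    intro k
    have hℓz : (0:ℤ) < (ℓ:ℤ) := by exact_mod_cast hℓ
    have hdecomp : k % (ℓ:ℤ) + (ℓ:ℤ) * (k / (ℓ:ℤ)) = k := by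
      have := Int.emod_add_mul_ediv k (ℓ:ℤ); omega
    have h1' := shift (k / (ℓ:ℤ)) (k % (ℓ:ℤ))
    rw [hdecomp] at h1'
    rw [h1']
    constructor
    · intro hfk
      have hr0 : 0 ≤ k % (ℓ:ℤ) := Int.emod_nonneg k (by omega)
      have hrlt : k % (ℓ:ℤ) < (ℓ:ℤ) := Int.emod_lt_of_pos k hℓz
      by_contra hnd
      have hne : k % (ℓ:ℤ) ≠ 0 := by
        intro h'
        exact hnd (Int.dvd_of_emod_eq_zero h')
      have hj := hmin (k % (ℓ:ℤ)).toNat (by omega) (by omega)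
      rw [show (((k % (ℓ:ℤ)).toNat : ℤ)) = k % (ℓ:ℤ) by omega] at hj
      exact hj hfk
    · intro hd
      have : k % (ℓ:ℤ) = 0 := Int.emod_eq_zero_of_dvd hd
      rw [this, h0]
  -- the key identity : Δ_{s+d} - Δ_{s-d} = (δ²-4) f(s) f(d)
  have hId : ∀ s k : ℤ,
      f (s + k + 1) - f (s + k - 1) - (f (s - k + 1) - f (s - k - 1))
        = (δ^2 - 4) * f s * f k := by
    intro s
    refine qext δ
      (fun k => f (s + k + 1) - f (s + k - 1) - (f (s - k + 1) - f (s - k - 1)))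
      (fun k => (δ^2 - 4) * f s * f k) ?_ ?_ ?_ ?_
    · intro k
      have e1 := hrec (s + k + 1)
      rw [show s + k + 1 + 1 = s + k + 2 by ring, show s + k + 1 - 1 = s + k by ring] at e1
      have e2 := hrec (s + k - 1)
      rw [show s + k - 1 + 1 = s + k by ring, show s + k - 1 - 1 = s + k - 2 by ring] at e2
      have e3 := hrec (s - k + 1)
      rw [show s - k + 1 + 1 = s - k + 2 by ring, show s - k + 1 - 1 = s - k by ring] at e3
      have e4 := hrec (s - k - 1)
      rw [show s - k - 1 + 1 = s - k by ring, show s - k - 1 - 1 = s - k - 2 by ring] at e4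
      rw [show s + (k + 1) + 1 = s + k + 2 by ring, show s + (k + 1) - 1 = s + k by ring,
          show s - (k + 1) + 1 = s - k by ring, show s - (k + 1) - 1 = s - k - 2 by ring,
          show s + (k - 1) + 1 = s + k by ring, show s + (k - 1) - 1 = s + k - 2 by ring,
          show s - (k - 1) + 1 = s - k + 2 by ring, show s - (k - 1) - 1 = s - k by ring]
      linear_combination e1 - e2 - e3 + e4
    · intro k; linear_combination (δ^2 - 4) * f s * hrec k
    · rw [show s + 0 + 1 = s + 1 by ring, show s - 0 + 1 = s + 1 by ring,
          show s + 0 - 1 = s - 1 by ring, show s - 0 - 1 = s - 1 by ring, h0]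
      ring
    · have a := hrec (s + 1)
      rw [show s + 1 + 1 = s + 2 by ring, show s + 1 - 1 = s by ring] at a
      have b := hrec s
      have cc := hrec (s - 1)
      rw [show s - 1 + 1 = s by ring, show s - 1 - 1 = s - 2 by ring] at cc
      rw [show s + 1 + 1 = s + 2 by ring, show s + 1 - 1 = s by ring,
          show s - 1 + 1 = s by ring, show s - 1 - 1 = s - 2 by ring, h1]
      linear_combination a + δ * b + cc
  -- split n, m into half-sum and half-difference
  obtain ⟨d', hd'⟩ := hpar.dvd
  set s : ℤ := n + d' with hs
  set d : ℤ := -d' with hdd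
  have hn : n = s + d := by rw [hs, hdd]; ring
  have hm : m = s - d := by rw [hs, hdd]; omega
  rw [hn, hm] at hΔ
  have key : (δ^2 - 4) * f s * f d = 0 := by
    rw [← hId s d]
    linear_combination hΔ
  have h42 : (δ^2 - 4 : R) ≠ 0 := by
    intro h
    rcases mul_eq_zero.mp (show (δ - 2) * (δ + 2) = 0 by linear_combination h) with h' | h'
    · exact hδ (by linear_combination h')
    · exact hδ' (by linear_combination h')
  have hfd : f s * f d = 0 := by
    rw [mul_assoc] at key
    exact (mul_eq_zero.mp key).resolve_left h42
  rcases mul_eq_zero.mp hfd with hz | hz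
  · -- f s = 0 : n ≡ -m
    obtain ⟨t, ht⟩ := (hzero s).mp hz
    right
    rw [Int.ModEq]
    have : (2 * (ℓ:ℤ)) ∣ (-m - n) := ⟨-t, by rw [hn, hm, ht]; ring⟩
    exact (Int.modEq_iff_dvd.mpr this).symm.symm
  · -- f d = 0 : n ≡ m
    obtain ⟨t, ht⟩ := (hzero d).mp hz
    left
    have : (2 * (ℓ:ℤ)) ∣ (m - n) := ⟨-t, by rw [hn, hm, ht]; ring⟩
    exact Int.modEq_iff_dvd.mpr this
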